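/- Fix 0 < q ≤ 1 and write [n]_q = 1 + q + q² + … + q^{n−1} for the q-integer. For every natural number m, the limit as N → ∞ of ⟨e_N, ((a_q + a_q†)/√(2·[N]_q))^(2m) e_N⟩ equals (1/2^m)·(2m choose m), i.e. the arcsine law also emerges as the high-energy limit on the q-Fock space. -/

import Mathlib

open MeasureTheory Filter

noncomputable def e (n : ℕ) : ℕ →₀ ℝ := Finsupp.single n 1

noncomputable def innerF (f g : ℕ →₀ ℝ) : ℝ := f.sum fun n c => c * g n

/-- The `q`-integer `[n]_q = 1 + q + q² + … + q^{n−1}`. -/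
noncomputable def qInt (q : ℝ) (n : ℕ) : ℝ := ∑ i ∈ Finset.range n, q ^ i

/-- The `q`-annihilation operator: `a_q e_0 = 0`, `a_q e_n = √([n]_q) e_{n−1}`. -/
noncomputable def annQ (q : ℝ) : (ℕ →₀ ℝ) →ₗ[ℝ] (ℕ →₀ ℝ) :=
  Finsupp.lsum ℝ fun n => Real.sqrt (qInt q n) • (Finsupp.lsingle (n - 1) : ℝ →ₗ[ℝ] (ℕ →₀ ℝ))

/-- The `q`-creation operator: `a_q† e_n = √([n+1]_q) e_{n+1}`. -/
noncomputable def creQ (q : ℝ) : (ℕ →₀ ℝ) →ₗ[ℝ] (ℕ →₀ ℝ) :=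
  Finsupp.lsum ℝ fun n => Real.sqrt (qInt q (n + 1)) • (Finsupp.lsingle (n + 1) : ℝ →ₗ[ℝ] (ℕ →₀ ℝ))


noncomputable def stepP : AddMonoidAlgebra ℝ ℤ :=
  AddMonoidAlgebra.single 1 1 + AddMonoidAlgebra.single (-1) 1

noncomputable def pathA (j : ℕ) (k : ℤ) : ℝ := (stepP ^ j).coeff k

lemma pathA_zero (k : ℤ) : pathA 0 k = if k = 0 then 1 else 0 := by
  rw [pathA, pow_zero]
  rw [show (1 : AddMonoidAlgebra ℝ ℤ) = AddMonoidAlgebra.single 0 1 from rfl,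
    AddMonoidAlgebra.coeff_single, Finsupp.single_apply]
  simp [eq_comm]

lemma pathA_succ (j : ℕ) (k : ℤ) : pathA (j+1) k = pathA j (k+1) + pathA j (k-1) := by
  simp only [pathA, pow_succ', stepP]
  rw [add_mul, AddMonoidAlgebra.coeff_add, Finsupp.add_apply, AddMonoidAlgebra.coeff_single_mul_apply,
    AddMonoidAlgebra.coeff_single_mul_apply]
  rw [one_mul, one_mul, neg_neg]
  rw [show (-1:ℤ) + k = k - 1 by ring, show (1:ℤ) + k = k + 1 by ring, add_comm]

lemma pathA_eval (m : ℕ) : pathA (2*m) 0 = (Nat.choose (2*m) m : ℝ) := by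
  rw [pathA, stepP, add_pow]
  rw [AddMonoidAlgebra.coeff_sum, Finsupp.finset_sum_apply]
  rw [Finset.sum_eq_single m]
  · rw [AddMonoidAlgebra.single_pow, AddMonoidAlgebra.single_pow, one_pow, one_pow,
      AddMonoidAlgebra.single_mul_single, one_mul, AddMonoidAlgebra.natCast_def,
      AddMonoidAlgebra.single_mul_single, AddMonoidAlgebra.coeff_single, Finsupp.single_apply, if_pos, one_mul]
    have : (2*m - m : ℕ) = m := by omega
    simp [this, nsmul_eq_mul]
  · intro i hi hne
    rw [AddMonoidAlgebra.single_pow, AddMonoidAlgebra.single_pow, one_pow, one_pow,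
      AddMonoidAlgebra.single_mul_single, one_mul, AddMonoidAlgebra.natCast_def,
      AddMonoidAlgebra.single_mul_single, AddMonoidAlgebra.coeff_single, Finsupp.single_apply, if_neg]
    simp only [Finset.mem_range] at hi
    have h2 : (2*m - i : ℕ) = ((2*m : ℕ) : ℤ) - i := by omega
    simp only [nsmul_eq_mul, mul_one, mul_neg, h2, add_zero]
    push_cast
    omega
  · intro h
    exact absurd (Finset.mem_range.mpr (by omega)) h

variable {q : ℝ}

lemma qInt_nonneg (hq0 : 0 < q) (n : ℕ) : 0 ≤ qInt q n :=
  Finset.sum_nonneg fun i _ => pow_nonneg hq0.le i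

lemma qInt_pos (hq0 : 0 < q) {n : ℕ} (hn : 0 < n) : 0 < qInt q n := by
  apply Finset.sum_pos (fun i _ => pow_pos hq0 i)
  exact Finset.nonempty_range_iff.mpr hn.ne'

lemma qInt_add (n a : ℕ) : qInt q (n + a) = qInt q n + q ^ n * qInt q a := by
  rw [qInt, Finset.sum_range_add, qInt, qInt, Finset.mul_sum]
  simp [pow_add]

lemma qInt_ge (hq0 : 0 < q) (hq1 : q ≤ 1) (n : ℕ) : (n : ℝ) * q ^ n ≤ qInt q n := by
  rw [qInt]
  calc (n : ℝ) * q ^ n = ∑ _i ∈ Finset.range n, q ^ n := by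
        rw [Finset.sum_const, Finset.card_range, nsmul_eq_mul]
    _ ≤ ∑ i ∈ Finset.range n, q ^ i := by
        apply Finset.sum_le_sum
        intro i hi
        exact pow_le_pow_of_le_one hq0.le hq1 (Finset.mem_range.mp hi).le

lemma tendsto_pow_div_qInt (hq0 : 0 < q) (hq1 : q ≤ 1) :
    Tendsto (fun N : ℕ => q ^ N / qInt q N) atTop (nhds 0) := by
  apply squeeze_zero' (g := fun N : ℕ => 1 / (N : ℝ))
  · filter_upwards [eventually_ge_atTop 1] with N hN
    exact div_nonneg (pow_nonneg hq0.le N) (qInt_nonneg hq0 N)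
  · filter_upwards [eventually_ge_atTop 1] with N hN
    rw [div_le_div_iff₀ (qInt_pos hq0 hN) (by positivity), one_mul, mul_comm]
    exact qInt_ge hq0 hq1 N
  · exact tendsto_one_div_atTop_nhds_zero_nat

lemma tendsto_qInt_ratio (hq0 : 0 < q) (hq1 : q ≤ 1) (a : ℕ) :
    Tendsto (fun N : ℕ => qInt q (N + a) / qInt q N) atTop (nhds 1) := by
  have h : ∀ᶠ N : ℕ in atTop, qInt q (N + a) / qInt q N = 1 + qInt q a * (q ^ N / qInt q N) := by
    filter_upwards [eventually_ge_atTop 1] with N hN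
    rw [qInt_add, add_div, div_self (qInt_pos hq0 hN).ne', mul_comm (q ^ N), mul_div_assoc]
  have := ((tendsto_pow_div_qInt hq0 hq1).const_mul (qInt q a)).const_add 1
  simp only [mul_zero, add_zero] at this
  exact this.congr' (h.mono fun N hN => hN.symm)

lemma tendsto_qInt_ratio2 (hq0 : 0 < q) (hq1 : q ≤ 1) (a b : ℕ) :
    Tendsto (fun N : ℕ => qInt q (N + a) / qInt q (N + b)) atTop (nhds 1) := by
  have h := ((tendsto_qInt_ratio hq0 hq1 a).div (tendsto_qInt_ratio hq0 hq1 b) one_ne_zero)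
  rw [div_one] at h
  apply h.congr'
  filter_upwards [eventually_ge_atTop 1] with N hN
  have hN' : qInt q N ≠ 0 := (qInt_pos hq0 hN).ne'
  simp only [Pi.div_apply]
  field_simp

lemma tendsto_qInt_ratioZ (hq0 : 0 < q) (hq1 : q ≤ 1) (k : ℤ) :
    Tendsto (fun N : ℕ => qInt q ((N : ℤ) + k).toNat / qInt q N) atTop (nhds 1) := by
  set b := k.natAbs with hb
  set a := (k + b).toNat with ha
  have hg := tendsto_qInt_ratio2 hq0 hq1 a b
  have hsub : Tendsto (fun N : ℕ => N - b) atTop atTop := tendsto_sub_atTop_nat b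
  apply (hg.comp hsub).congr'
  filter_upwards [eventually_ge_atTop b] with N hN
  have h1 : (N - b) + b = N := by omega
  have h2 : ((N : ℤ) + k).toNat = (N - b) + a := by
    have : (k + (b:ℤ)) ≥ 0 := by
      rw [hb]; omega
    omega
  simp only [Function.comp_apply, h1, h2]

lemma tendsto_weight (hq0 : 0 < q) (hq1 : q ≤ 1) (k : ℤ) :
    Tendsto (fun N : ℕ => Real.sqrt (qInt q ((N : ℤ) + k).toNat) / Real.sqrt (2 * qInt q N))
      atTop (nhds (Real.sqrt 2)⁻¹) := by
  have key : Tendsto (fun N : ℕ => qInt q ((N : ℤ) + k).toNat / (2 * qInt q N)) atTop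
      (nhds (1 / 2)) := by
    have h := (tendsto_qInt_ratioZ hq0 hq1 k).div_const 2
    apply h.congr
    intro N
    rw [div_div, mul_comm (qInt q N) 2]
  have hc : Tendsto Real.sqrt (nhds (1/2 : ℝ)) (nhds (Real.sqrt (1/2))) :=
    Real.continuous_sqrt.continuousAt
  have := hc.comp key
  have heq : Real.sqrt (1/2) = (Real.sqrt 2)⁻¹ := by
    rw [Real.sqrt_div (by norm_num), Real.sqrt_one, one_div]
  rw [heq] at this
  apply this.congr
  intro N
  rw [Function.comp_apply, Real.sqrt_div (qInt_nonneg hq0 _)]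

lemma qInt_zero : qInt q 0 = 0 := by simp [qInt]

lemma ann_apply (f : ℕ →₀ ℝ) (n : ℕ) :
    (annQ q f) n = Real.sqrt (qInt q (n + 1)) * f (n + 1) := by
  rw [annQ, Finsupp.lsum_apply, Finsupp.sum_apply, Finsupp.sum]
  have hterm : ∀ k : ℕ, ((Real.sqrt (qInt q k) •
      (Finsupp.lsingle (k-1) : ℝ →ₗ[ℝ] (ℕ →₀ ℝ))) (f k)) n
      = if k - 1 = n then Real.sqrt (qInt q k) * f k else 0 := by
    intro k
    rw [LinearMap.smul_apply, Finsupp.lsingle_apply, Finsupp.smul_apply,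
      Finsupp.single_apply, smul_eq_mul, mul_ite, mul_zero]
  simp only [hterm]
  rw [Finset.sum_eq_single (n + 1)]
  · simp
  · intro k hk hne
    by_cases h : k - 1 = n
    · have hk0 : k = 0 := by omega
      rw [if_pos h, hk0, qInt_zero, Real.sqrt_zero, zero_mul]
    · rw [if_neg h]
  · intro h
    rw [Finsupp.notMem_support_iff.mp h]
    simp

lemma cre_apply (f : ℕ →₀ ℝ) (n : ℕ) :
    (creQ q f) n = Real.sqrt (qInt q n) * f (n - 1) := by
  rw [creQ, Finsupp.lsum_apply, Finsupp.sum_apply, Finsupp.sum]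
  have hterm : ∀ k : ℕ, ((Real.sqrt (qInt q (k+1)) •
      (Finsupp.lsingle (k+1) : ℝ →ₗ[ℝ] (ℕ →₀ ℝ))) (f k)) n
      = if k + 1 = n then Real.sqrt (qInt q (k+1)) * f k else 0 := by
    intro k
    rw [LinearMap.smul_apply, Finsupp.lsingle_apply, Finsupp.smul_apply,
      Finsupp.single_apply, smul_eq_mul, mul_ite, mul_zero]
  simp only [hterm]
  rw [Finset.sum_eq_single (n - 1)]
  · rcases n with _ | n
    · simp [qInt_zero]
    · simp
  · intro k hk hne
    rw [if_neg]
    omega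
  · intro h
    rw [Finsupp.notMem_support_iff.mp h]
    simp

lemma iter_succ (N j n : ℕ) :
    ((((Real.sqrt (2 * qInt q N))⁻¹ • (annQ q + creQ q)) ^ (j+1)) (e N)) n =
      Real.sqrt (qInt q (n+1)) / Real.sqrt (2 * qInt q N) *
        (((((Real.sqrt (2 * qInt q N))⁻¹ • (annQ q + creQ q)) ^ j) (e N)) (n+1)) +
      Real.sqrt (qInt q n) / Real.sqrt (2 * qInt q N) *
        (((((Real.sqrt (2 * qInt q N))⁻¹ • (annQ q + creQ q)) ^ j) (e N)) (n-1)) := by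
  rw [pow_succ', Module.End.mul_apply, LinearMap.smul_apply, Finsupp.smul_apply,
    LinearMap.add_apply, Finsupp.add_apply, ann_apply, cre_apply, smul_eq_mul]
  field_simp

lemma main_tendsto (hq0 : 0 < q) (hq1 : q ≤ 1) (j : ℕ) : ∀ k : ℤ,
    Tendsto (fun N : ℕ =>
        ((((Real.sqrt (2 * qInt q N))⁻¹ • (annQ q + creQ q)) ^ j) (e N)) ((N:ℤ)+k).toNat)
      atTop (nhds (pathA j k / (Real.sqrt 2) ^ j)) := by
  induction j with
  | zero =>
    intro k
    simp only [pow_zero, Module.End.one_apply, div_one]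
    apply tendsto_const_nhds.congr'
    filter_upwards [eventually_ge_atTop (k.natAbs+1)] with N hN
    rw [pathA_zero, e, Finsupp.single_apply]
    apply if_congr _ rfl rfl
    omega
  | succ j ih =>
    intro k
    have w1 := tendsto_weight hq0 hq1 (k+1)
    have w2 := tendsto_weight hq0 hq1 k
    have t := (w1.mul (ih (k+1))).add (w2.mul (ih (k-1)))
    have hlim : (Real.sqrt 2)⁻¹ * (pathA j (k+1) / (Real.sqrt 2) ^ j) +
        (Real.sqrt 2)⁻¹ * (pathA j (k-1) / (Real.sqrt 2) ^ j)
        = pathA (j+1) k / (Real.sqrt 2) ^ (j+1) := by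
      have h2 : Real.sqrt 2 ≠ 0 := by positivity
      rw [pathA_succ, pow_succ, inv_mul_eq_div, inv_mul_eq_div, div_div, div_div, ← add_div]
    rw [hlim] at t
    apply t.congr'
    filter_upwards [eventually_ge_atTop (k.natAbs+2)] with N hN
    have hk : ((N:ℤ)+k).toNat + 1 = ((N:ℤ)+(k+1)).toNat := by omega
    have hk' : ((N:ℤ)+k).toNat - 1 = ((N:ℤ)+(k-1)).toNat := by omega
    rw [iter_succ, hk, hk']

/-- On the `q`-Fock space (`0 < q ≤ 1`), the even moments of the rescaled
position in the `N`-th number state converge to the even moments of the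
normalized arcsine law. -/
theorem qFock_arcsine_even_moments_limit (q : ℝ) (hq0 : 0 < q) (hq1 : q ≤ 1) (m : ℕ) :
    Tendsto
      (fun N : ℕ =>
        innerF (e N)
          ((((Real.sqrt (2 * qInt q N))⁻¹ • (annQ q + creQ q)) ^ (2 * m)) (e N)))
      atTop (nhds ((Nat.choose (2 * m) m : ℝ) / 2 ^ m)) := by
  have h := main_tendsto hq0 hq1 (2*m) 0
  have hval : pathA (2*m) 0 / (Real.sqrt 2) ^ (2*m) = (Nat.choose (2*m) m : ℝ) / 2 ^ m := by
    rw [pathA_eval, pow_mul, Real.sq_sqrt (by norm_num : (0:ℝ) ≤ 2)]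
  rw [hval] at h
  apply h.congr
  intro N
  have hidx : ((N:ℤ) + 0).toNat = N := by omega
  rw [hidx, innerF, e, Finsupp.sum_single_index (by rw [zero_mul]), one_mul]
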